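/- Every feasible point (beta_0,...,beta_{2^d-1}, M) of the market's linear program satisfies M <= 2^{-d} * sum over m in {0,1}^d of (q(m) - r(m))^2. -/

import Mathlib

/-- The left-shift map of the `d`-dimensional de Bruijn graph on 2 symbols. -/
def deBruijnShift (d : ℕ) (m : Fin d → Bool) (c : Bool) : Fin d → Bool :=
  fun i => if h : (i : ℕ) + 1 < d then m ⟨(i : ℕ) + 1, h⟩ else c

/-- A simple cycle of the de Bruijn graph, recorded as the list of its edges
`(vertex, label)`: each edge leads to the next vertex (cyclically), and no
vertex is repeated. -/
def IsSimpleCycleDB (d : ℕ) (L : List ((Fin d → Bool) × Bool)) : Prop :=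
  L ≠ [] ∧ (L.map Prod.fst).Nodup ∧
  ∀ i : Fin L.length,
    deBruijnShift d (L.get i).1 (L.get i).2
      = (L.get ⟨((i : ℕ) + 1) % L.length, Nat.mod_lt _ i.pos⟩).1

/-- Sum of a function over `List.range` equals the `Finset.range` sum. -/
lemma list_range_map_sum (h : ℕ → ℝ) (n : ℕ) :
    ((List.range n).map h).sum = ∑ i ∈ Finset.range n, h i := by
  induction n with
  | zero => simp
  | succ n ih => simp [List.range_succ, Finset.sum_range_succ, ih]

/-- Generic orbit-averaging lemma: if a bijection's orbit constraints all hold,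
then the averaged bound holds. -/
lemma orbit_avg {α : Type*} [Fintype α] (σ : α → α) (hbij : Function.Bijective σ)
    (f : α → ℝ) (M : ℝ)
    (h : ∀ a : α, ((Function.minimalPeriod σ a : ℕ) : ℝ) * M ≤
        ∑ i ∈ Finset.range (Function.minimalPeriod σ a), f (σ^[i] a)) :
    (Fintype.card α : ℝ) * M ≤ ∑ a, f a := by
  classical
  set e : α ≃ α := Equiv.ofBijective σ hbij with he
  have hcoe : ∀ n : ℕ, ⇑(e ^ n) = σ^[n] := by
    intro n
    rw [Equiv.Perm.coe_pow]
    rfl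
  have hper : ∀ a : α, a ∈ Function.periodicPts σ := by
    intro a
    have hn : 0 < orderOf e := orderOf_pos e
    refine Function.mk_mem_periodicPts hn ?_
    have : (e ^ orderOf e) a = a := by rw [pow_orderOf_eq_one]; rfl
    rw [hcoe] at this
    exact this
  set k : α → ℕ := fun a => Function.minimalPeriod σ a with hk
  have hkpos : ∀ a, 0 < k a := fun a =>
    Function.minimalPeriod_pos_of_mem_periodicPts (hper a)
  have hkit : ∀ a (i : ℕ), k (σ^[i] a) = k a := fun a i =>
    Function.minimalPeriod_apply_iterate (hper a) i
  -- key identity: sum of orbit averages equals the sum of f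
  have key : ∑ a : α, (∑ i ∈ Finset.range (k a), f (σ^[i] a)) / (k a : ℝ)
      = ∑ a : α, f a := by
    have h1 : ∀ a : α, (∑ i ∈ Finset.range (k a), f (σ^[i] a)) / (k a : ℝ)
        = ∑ i ∈ Finset.range (k a), f (σ^[i] a) / (k a : ℝ) := by
      intro a; rw [Finset.sum_div]
    simp_rw [h1]
    rw [← Finset.sum_sigma (Finset.univ) (fun a => Finset.range (k a))
      (fun p => f (σ^[p.2] p.1) / (k p.1 : ℝ))]
    have h2 : ∑ a : α, f a = ∑ a : α, ∑ _i ∈ Finset.range (k a), f a / (k a : ℝ) := by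
      refine Finset.sum_congr rfl fun a _ => ?_
      rw [Finset.sum_const, Finset.card_range, nsmul_eq_mul, mul_div_cancel₀]
      exact Nat.cast_ne_zero.mpr (hkpos a).ne'
    rw [h2, ← Finset.sum_sigma (Finset.univ) (fun a => Finset.range (k a))
      (fun p => f p.1 / (k p.1 : ℝ))]
    refine Finset.sum_nbij' (fun p => ⟨σ^[p.2] p.1, p.2⟩)
      (fun p => ⟨(⇑e.symm)^[p.2] p.1, p.2⟩) ?_ ?_ ?_ ?_ ?_
    · rintro ⟨a, i⟩ hp
      simp only [Finset.mem_sigma, Finset.mem_univ, Finset.mem_range, true_and] at hp ⊢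
      rw [hkit]; exact hp
    · rintro ⟨b, i⟩ hp
      simp only [Finset.mem_sigma, Finset.mem_univ, Finset.mem_range, true_and] at hp ⊢
      have hb : σ^[i] ((⇑e.symm)^[i] b) = b := by
        have : Function.RightInverse ⇑e.symm σ := fun x => e.apply_symm_apply x
        exact Function.RightInverse.iterate this i b
      rw [← hkit ((⇑e.symm)^[i] b) i, hb]; exact hp
    · rintro ⟨a, i⟩ _
      have : Function.LeftInverse ⇑e.symm σ := fun x => e.symm_apply_apply x
      have h3 := Function.LeftInverse.iterate this i a
      simp only [Sigma.mk.inj_iff, heq_eq_eq, and_true]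
      exact h3
    · rintro ⟨b, i⟩ _
      have : Function.RightInverse ⇑e.symm σ := fun x => e.apply_symm_apply x
      have h3 := Function.RightInverse.iterate this i b
      simp only [Sigma.mk.inj_iff, heq_eq_eq, and_true]
      exact h3
    · rintro ⟨a, i⟩ _
      simp only
      rw [hkit]
  calc (Fintype.card α : ℝ) * M = ∑ _a : α, M := by
        rw [Finset.sum_const, Finset.card_univ, nsmul_eq_mul]
    _ ≤ ∑ a : α, (∑ i ∈ Finset.range (k a), f (σ^[i] a)) / (k a : ℝ) := by
        refine Finset.sum_le_sum fun a _ => ?_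
        rw [le_div_iff₀ (by exact_mod_cast hkpos a)]
        rw [mul_comm]
        exact h a
    _ = ∑ a : α, f a := key

/-- the first bit of a word (true for the empty word). -/
def firstBit (d : ℕ) (m : Fin d → Bool) : Bool :=
  if h : 0 < d then m ⟨0, h⟩ else true

lemma shift_injective (d : ℕ) (g : Bool → Bool) (hg : Function.Injective g) :
    Function.Injective (fun m => deBruijnShift d m (g (firstBit d m))) := by
  intro m m' hmm
  rcases Nat.eq_zero_or_pos d with hd | hd
  · subst hd; funext i; exact absurd i.2 (by omega)
  have happ : ∀ i : Fin d, deBruijnShift d m (g (firstBit d m)) i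
      = deBruijnShift d m' (g (firstBit d m')) i := fun i => congrFun hmm i
  have hlast : g (firstBit d m) = g (firstBit d m') := by
    have h := happ ⟨d - 1, by omega⟩
    simpa [deBruijnShift, Nat.sub_add_cancel hd] using h
  have hfirst : firstBit d m = firstBit d m' := hg hlast
  funext j
  rcases Nat.eq_zero_or_pos (j : ℕ) with hj | hj
  · have : j = ⟨0, hd⟩ := by ext; exact hj
    rw [this]
    simpa [firstBit, hd] using hfirst
  · have hjd : (j : ℕ) - 1 + 1 < d := by omega
    have h := happ ⟨(j : ℕ) - 1, by omega⟩
    simp only [deBruijnShift, hjd, dif_pos] at h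
    have hjj : (⟨(j : ℕ) - 1 + 1, hjd⟩ : Fin d) = j := by ext; simp; omega
    rwa [hjj] at h

/-- The orbit of a point under a shift-with-label map is a simple cycle. -/
lemma orbit_isSimpleCycle (d : ℕ) (g : Bool → Bool) (hg : Function.Injective g)
    (a : Fin d → Bool)
    (ha : a ∈ Function.periodicPts (fun m => deBruijnShift d m (g (firstBit d m)))) :
    IsSimpleCycleDB d
      ((List.range (Function.minimalPeriod
          (fun m => deBruijnShift d m (g (firstBit d m))) a)).map
        (fun i => ((fun m => deBruijnShift d m (g (firstBit d m)))^[i] a,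
          g (firstBit d ((fun m => deBruijnShift d m (g (firstBit d m)))^[i] a))))) := by
  set σ : (Fin d → Bool) → (Fin d → Bool) :=
    fun m => deBruijnShift d m (g (firstBit d m)) with hσ
  set k : ℕ := Function.minimalPeriod σ a with hk
  have hkpos : 0 < k := Function.minimalPeriod_pos_of_mem_periodicPts ha
  set L : List ((Fin d → Bool) × Bool) :=
    (List.range k).map (fun i => (σ^[i] a, g (firstBit d (σ^[i] a)))) with hL
  have hlen : L.length = k := by simp [hL]
  refine ⟨?_, ?_, ?_⟩
  · intro h
    rw [← List.length_eq_zero_iff] at h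
    omega
  · have : L.map Prod.fst = (List.range k).map (fun i => σ^[i] a) := by
      rw [hL, List.map_map]
      rfl
    rw [this, List.nodup_map_iff_inj_on List.nodup_range]
    intro i hi j hj hij
    rw [List.mem_range] at hi hj
    exact Function.iterate_injOn_Iio_minimalPeriod hi hj hij
  · intro i
    have hgeti : ∀ (n : Fin L.length),
        L.get n = (σ^[(n : ℕ)] a, g (firstBit d (σ^[(n : ℕ)] a))) := by
      intro n
      have hn : (n : ℕ) < k := by rw [← hlen]; exact n.2
      simp [hL, List.get_eq_getElem]
    rw [hgeti i, hgeti ⟨((i : ℕ) + 1) % L.length, Nat.mod_lt _ i.pos⟩]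
    simp only
    have : deBruijnShift d (σ^[(i : ℕ)] a) (g (firstBit d (σ^[(i : ℕ)] a)))
        = σ^[(i : ℕ) + 1] a := by
      rw [Function.iterate_succ_apply']
    have hmod : ((i : ℕ) + 1) % L.length = ((i : ℕ) + 1) % k := by simp only [hlen]
    rw [this, hmod]
    exact (Function.iterate_mod_minimalPeriod_eq).symm

theorem market_LP_upper_bound (d : ℕ) (q r β : (Fin d → Bool) → ℝ) (M : ℝ)
    (hfeas : ∀ L : List ((Fin d → Bool) × Bool), IsSimpleCycleDB d L →
      (L.length : ℝ) * M ≤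
        (L.map fun e => (q e.1 - r e.1) ^ 2 - (if e.2 then β e.1 else -β e.1)).sum) :
    M ≤ (∑ m : Fin d → Bool, (q m - r m) ^ 2) / 2 ^ d := by
  classical
  -- For each injective relabeling g, get the averaged bound.
  have main : ∀ g : Bool → Bool, Function.Injective g →
      (Fintype.card (Fin d → Bool) : ℝ) * M ≤
        ∑ m : Fin d → Bool,
          ((q m - r m) ^ 2 - (if g (firstBit d m) then β m else -β m)) := by
    intro g hg
    set σ : (Fin d → Bool) → (Fin d → Bool) :=
      fun m => deBruijnShift d m (g (firstBit d m)) with hσ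
    have hinj : Function.Injective σ := shift_injective d g hg
    have hbij : Function.Bijective σ := (Finite.injective_iff_bijective).mp hinj
    set F : (Fin d → Bool) → ℝ :=
      fun m => (q m - r m) ^ 2 - (if g (firstBit d m) then β m else -β m) with hF
    refine orbit_avg σ hbij F M ?_
    intro a
    have hper : a ∈ Function.periodicPts σ := by
      set e := Equiv.ofBijective σ hbij with he
      have hn : 0 < orderOf e := orderOf_pos e
      refine Function.mk_mem_periodicPts hn ?_
      have h1 : (e ^ orderOf e) a = a := by rw [pow_orderOf_eq_one]; rfl
      rw [Equiv.Perm.coe_pow] at h1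
      have h2 : σ^[orderOf e] a = a := h1
      exact h2
    set k : ℕ := Function.minimalPeriod σ a with hk
    set L : List ((Fin d → Bool) × Bool) :=
      (List.range k).map (fun i => (σ^[i] a, g (firstBit d (σ^[i] a)))) with hL
    have hcyc : IsSimpleCycleDB d L := orbit_isSimpleCycle d g hg a hper
    have hconstraint := hfeas L hcyc
    have hlen : L.length = k := by simp [hL]
    have hsum : (L.map fun e => (q e.1 - r e.1) ^ 2
        - (if e.2 then β e.1 else -β e.1)).sum
        = ∑ i ∈ Finset.range k, F (σ^[i] a) := by
      rw [hL, List.map_map]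
      exact list_range_map_sum _ k
    rw [hlen] at hconstraint
    rw [hsum] at hconstraint
    exact hconstraint
  have h1 := main id Function.injective_id
  have hnotinj : Function.Injective Bool.not := by
    intro a b h; cases a <;> cases b <;> simp_all
  have h2 := main Bool.not hnotinj
  have hcard : (Fintype.card (Fin d → Bool) : ℝ) = 2 ^ d := by
    simp [Fintype.card_fun]
  rw [hcard] at h1 h2
  -- add the two inequalities; the β terms cancel
  have hadd : (2 : ℝ) ^ d * M + 2 ^ d * M ≤
      (∑ m : Fin d → Bool, ((q m - r m) ^ 2
          - (if id (firstBit d m) then β m else -β m)))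
      + ∑ m : Fin d → Bool, ((q m - r m) ^ 2
          - (if Bool.not (firstBit d m) then β m else -β m)) := add_le_add h1 h2
  rw [← Finset.sum_add_distrib] at hadd
  have hcancel : ∀ m : Fin d → Bool,
      ((q m - r m) ^ 2 - (if id (firstBit d m) then β m else -β m))
      + ((q m - r m) ^ 2 - (if Bool.not (firstBit d m) then β m else -β m))
      = 2 * (q m - r m) ^ 2 := by
    intro m
    cases firstBit d m <;> simp <;> ring
  simp_rw [hcancel] at hadd
  rw [← Finset.mul_sum] at hadd
  have hpow : (0 : ℝ) < 2 ^ d := by positivity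
  rw [le_div_iff₀ hpow]
  nlinarith [hadd]
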